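/- For every ρ > 0, the normalized width of the Berger sphere (S³, g_ρ) is given by W(S³,g_ρ)/vol(S³,g_ρ)^{2/3} = (2/π)^{1/3} ∫₀^π sin(s) √((1 − sin²(s)) ρ^{−4/3} + sin²(s) ρ^{2/3}) ds. Define F(ρ) to be this expression. Then F has a strict local minimum at ρ = 1, and F(ρ) → ∞ as ρ → ∞ and as ρ → 0⁺; in particular F is not bounded above on (0, √2). -/

import Mathlib

open Filter Topology Real

noncomputable def berI (a b : ℝ) : ℝ :=
  ∫ s in (0 : ℝ)..π, Real.sin s *
    Real.sqrt ((1 - Real.sin s ^ 2) * a + Real.sin s ^ 2 * b)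

lemma intPoly (c1 c2 c3 : ℝ) :
    ∫ s in (0:ℝ)..π, Real.sin s * (c1 + c2 * Real.cos s ^ 2 + c3 * Real.cos s ^ 4)
      = 2*c1 + 2*c2/3 + 2*c3/5 := by
  have h : ∀ s ∈ Set.uIcc (0:ℝ) π,
      HasDerivAt (fun t => -(c1 * Real.cos t + c2/3 * Real.cos t ^ 3 + c3/5 * Real.cos t ^ 5))
        (Real.sin s * (c1 + c2 * Real.cos s ^ 2 + c3 * Real.cos s ^ 4)) s := by
    intro s _
    have hc := Real.hasDerivAt_cos s
    have h3 := hc.pow 3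
    have h5 := hc.pow 5
    have h := (((hc.const_mul c1).add (h3.const_mul (c2/3))).add (h5.const_mul (c3/5))).neg
    refine (h.congr_deriv ?_).congr_of_eventuallyEq (Filter.Eventually.of_forall fun t => ?_)
    · push_cast
      ring
    · rfl
  have hint : IntervalIntegrable
      (fun s => Real.sin s * (c1 + c2 * Real.cos s ^ 2 + c3 * Real.cos s ^ 4))
      MeasureTheory.volume 0 π :=
    (by fun_prop : Continuous fun s => Real.sin s * (c1 + c2 * Real.cos s ^ 2 + c3 * Real.cos s ^ 4)).intervalIntegrable _ _
  rw [intervalIntegral.integral_eq_sub_of_hasDerivAt h hint]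
  simp only [Real.cos_pi, Real.cos_zero]
  ring

lemma sqrt_lb {x : ℝ} (hx : 0 ≤ x) : (3*x - x^2)/2 ≤ Real.sqrt x := by
  have h1 := Real.sq_sqrt hx
  have h2 := Real.sqrt_nonneg x
  nlinarith [mul_nonneg (mul_nonneg h2 (sq_nonneg (Real.sqrt x - 1)))
      (by linarith : (0:ℝ) ≤ Real.sqrt x + 2)]

lemma berI_cont (a b : ℝ) : Continuous (fun s => Real.sin s *
    Real.sqrt ((1 - Real.sin s ^ 2) * a + Real.sin s ^ 2 * b)) := by fun_prop

lemma X_nonneg (a b : ℝ) (ha : 0 ≤ a) (hb : 0 ≤ b) (s : ℝ) :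
    0 ≤ (1 - Real.sin s ^ 2) * a + Real.sin s ^ 2 * b := by
  have h : (0:ℝ) ≤ 1 - Real.sin s ^ 2 := by
    nlinarith [Real.sin_sq_add_cos_sq s, sq_nonneg (Real.cos s)]
  exact add_nonneg (mul_nonneg h ha) (mul_nonneg (sq_nonneg _) hb)

lemma lowerB (a b : ℝ) (ha : 0 ≤ a) (hb : 0 ≤ b) :
    a + 2*b - a^2/5 - 4*(a*b)/15 - 8*b^2/15 ≤ berI a b := by
  have key : ∫ s in (0:ℝ)..π, Real.sin s * (((3*b-b^2)/2) + ((a-b)*(3-2*b)/2) * Real.cos s ^2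
        + (-((a-b)^2)/2) * Real.cos s ^4) ≤ berI a b := by
    apply intervalIntegral.integral_mono_on Real.pi_pos.le
    · exact (by fun_prop : Continuous fun s => Real.sin s * (((3*b-b^2)/2)
        + ((a-b)*(3-2*b)/2) * Real.cos s ^2 + (-((a-b)^2)/2) * Real.cos s ^4)).intervalIntegrable _ _
    · exact (berI_cont a b).intervalIntegrable _ _
    · intro s hs
      have hsin := Real.sin_nonneg_of_nonneg_of_le_pi hs.1 hs.2
      have hX := X_nonneg a b ha hb s
      have hPeq : Real.sin s * (((3*b-b^2)/2) + ((a-b)*(3-2*b)/2) * Real.cos s ^2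
            + (-((a-b)^2)/2) * Real.cos s ^4)
          = Real.sin s * ((3*((1 - Real.sin s^2) * a + Real.sin s^2 * b)
            - ((1 - Real.sin s^2) * a + Real.sin s^2 * b)^2)/2) := by
        rw [Real.sin_sq]; ring
      rw [hPeq]
      exact mul_le_mul_of_nonneg_left (sqrt_lb hX) hsin
  rw [intPoly] at key
  calc a + 2*b - a^2/5 - 4*(a*b)/15 - 8*b^2/15
      = 2*((3*b-b^2)/2) + 2*((a-b)*(3-2*b)/2)/3 + 2*(-((a-b)^2)/2)/5 := by ring
    _ ≤ berI a b := key

/-- Lower bound via the `b`-part: berI a b ≥ (4/3)√b. -/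
lemma lower_b (a b : ℝ) (ha : 0 ≤ a) (hb : 0 ≤ b) : (4/3) * Real.sqrt b ≤ berI a b := by
  have key : ∫ s in (0:ℝ)..π, Real.sin s * (Real.sqrt b + (-Real.sqrt b) * Real.cos s ^2
        + 0 * Real.cos s ^4) ≤ berI a b := by
    apply intervalIntegral.integral_mono_on Real.pi_pos.le
    · exact (by fun_prop : Continuous fun s => Real.sin s * (Real.sqrt b
        + (-Real.sqrt b) * Real.cos s ^2 + 0 * Real.cos s ^4)).intervalIntegrable _ _
    · exact (berI_cont a b).intervalIntegrable _ _
    · intro s hs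
      have hsin := Real.sin_nonneg_of_nonneg_of_le_pi hs.1 hs.2
      have hsin1 : Real.sin s ≤ 1 := Real.sin_le_one s
      have h1 : Real.sin s ^ 2 * b ≤ (1 - Real.sin s ^ 2) * a + Real.sin s ^ 2 * b := by
        have h : (0:ℝ) ≤ 1 - Real.sin s ^ 2 := by nlinarith
        nlinarith [mul_nonneg h ha]
      have h2 : Real.sqrt (Real.sin s ^ 2 * b) = Real.sin s * Real.sqrt b := by
        rw [Real.sqrt_mul (sq_nonneg _), Real.sqrt_sq_eq_abs, abs_of_nonneg hsin]
      have h3 := Real.sqrt_le_sqrt h1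
      rw [h2] at h3
      have h4 : Real.sin s * (Real.sqrt b + (-Real.sqrt b) * Real.cos s ^2 + 0 * Real.cos s ^4)
          ≤ Real.sin s * (Real.sin s * Real.sqrt b) := by
        have hss : Real.cos s ^ 2 = 1 - Real.sin s ^ 2 := by
          linarith [Real.sin_sq s]
        rw [hss]
        have hb' := Real.sqrt_nonneg b
        nlinarith [mul_nonneg (mul_nonneg (sq_nonneg (Real.sin s)) hb')
          (sub_nonneg.mpr hsin1)]
      exact h4.trans (mul_le_mul_of_nonneg_left h3 hsin)
  rw [intPoly] at key
  calc (4/3) * Real.sqrt b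
      = 2*Real.sqrt b + 2*(-Real.sqrt b)/3 + 2*0/5 := by ring
    _ ≤ berI a b := key

/-- Lower bound via the `a`-part: berI a b ≥ (2/3)√a. -/
lemma lower_a (a b : ℝ) (ha : 0 ≤ a) (hb : 0 ≤ b) : (2/3) * Real.sqrt a ≤ berI a b := by
  have key : ∫ s in (0:ℝ)..π, Real.sin s * ((0:ℝ) + Real.sqrt a * Real.cos s ^2
        + 0 * Real.cos s ^4) ≤ berI a b := by
    apply intervalIntegral.integral_mono_on Real.pi_pos.le
    · exact (by fun_prop : Continuous fun s => Real.sin s * ((0:ℝ)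
        + Real.sqrt a * Real.cos s ^2 + 0 * Real.cos s ^4)).intervalIntegrable _ _
    · exact (berI_cont a b).intervalIntegrable _ _
    · intro s hs
      have hsin := Real.sin_nonneg_of_nonneg_of_le_pi hs.1 hs.2
      have h1 : Real.cos s ^ 2 * a ≤ (1 - Real.sin s ^ 2) * a + Real.sin s ^ 2 * b := by
        have hss : Real.sin s ^ 2 = 1 - Real.cos s ^ 2 := Real.sin_sq s
        nlinarith [mul_nonneg (sq_nonneg (Real.sin s)) hb]
      have h2 : Real.sqrt (Real.cos s ^ 2 * a) = |Real.cos s| * Real.sqrt a := by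
        rw [Real.sqrt_mul (sq_nonneg _), Real.sqrt_sq_eq_abs]
      have h3 := Real.sqrt_le_sqrt h1
      rw [h2] at h3
      have h4 : (0:ℝ) + Real.sqrt a * Real.cos s ^2 + 0 * Real.cos s ^4
          ≤ |Real.cos s| * Real.sqrt a := by
        have hc1 : |Real.cos s| ≤ 1 := abs_cos_le_one s
        have hc0 : 0 ≤ |Real.cos s| := abs_nonneg _
        have ha' := Real.sqrt_nonneg a
        have habs : Real.cos s ^ 2 = |Real.cos s| ^ 2 := (sq_abs _).symm
        nlinarith [mul_nonneg (mul_nonneg ha' hc0) (sub_nonneg.mpr hc1)]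
      exact mul_le_mul_of_nonneg_left (h4.trans h3) hsin
  rw [intPoly] at key
  calc (2/3) * Real.sqrt a
      = 2*0 + 2*Real.sqrt a/3 + 2*0/5 := by ring
    _ ≤ berI a b := key

lemma berI_one : berI 1 1 = 2 := by
  have h : ∀ s : ℝ, Real.sin s * Real.sqrt ((1 - Real.sin s ^ 2) * 1 + Real.sin s ^ 2 * 1)
      = Real.sin s := by
    intro s
    have : (1 - Real.sin s ^ 2) * 1 + Real.sin s ^ 2 * 1 = 1 := by ring
    rw [this, Real.sqrt_one, mul_one]
  unfold berI
  simp only [h]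
  rw [integral_sin]
  norm_num

lemma sqrt_rpow_double (ρ : ℝ) (hρ : 0 < ρ) (y : ℝ) : Real.sqrt (ρ ^ (2*y)) = ρ ^ y := by
  have h1 : ρ ^ (2*y) = (ρ ^ y)^2 := by
    rw [show 2*y = y*2 by ring, Real.rpow_mul hρ.le, ← Real.rpow_natCast (ρ^y) 2]
    norm_num
  rw [h1, Real.sqrt_sq (Real.rpow_nonneg hρ.le y)]

/-- qualitative behaviour of the normalized width
F(ρ) of the Berger spheres: strict local minimum at ρ = 1, divergence as
ρ → 0⁺ and ρ → ∞, hence unboundedness on (0,√2). -/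
theorem stmt7 :
    let F : ℝ → ℝ := fun ρ => (2 / π) ^ ((1 : ℝ) / 3) *
      ∫ s in (0 : ℝ)..π, Real.sin s *
        Real.sqrt ((1 - Real.sin s ^ 2) * ρ ^ (-(4 : ℝ) / 3) +
          Real.sin s ^ 2 * ρ ^ ((2 : ℝ) / 3))
    (∃ δ > (0 : ℝ), ∀ ρ ∈ Set.Ioo (1 - δ) (1 + δ), ρ ≠ 1 → F 1 < F ρ) ∧
    Tendsto F atTop atTop ∧
    Tendsto F (𝓝[>] (0 : ℝ)) atTop ∧
    ¬ BddAbove (F '' Set.Ioo 0 (Real.sqrt 2)) := by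
  intro F
  have hC : (0:ℝ) < (2/π) ^ ((1:ℝ)/3) :=
    Real.rpow_pos_of_pos (div_pos two_pos Real.pi_pos) _
  have hFdef : ∀ ρ, F ρ = (2/π)^((1:ℝ)/3) * berI (ρ ^ (-(4:ℝ)/3)) (ρ ^ ((2:ℝ)/3)) :=
    fun ρ => rfl
  have hF1 : F 1 = (2/π)^((1:ℝ)/3) * 2 := by
    rw [hFdef, Real.one_rpow, Real.one_rpow, berI_one]
  -- divergence at infinity
  have htop : Tendsto F atTop atTop := by
    have hbound : ∀ ρ : ℝ, 0 < ρ →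
        (2/π)^((1:ℝ)/3) * ((4/3) * ρ^((1:ℝ)/3)) ≤ F ρ := by
      intro ρ hρ0
      rw [hFdef]
      apply mul_le_mul_of_nonneg_left _ hC.le
      have h := lower_b (ρ^(-(4:ℝ)/3)) (ρ^((2:ℝ)/3))
        (Real.rpow_nonneg hρ0.le _) (Real.rpow_nonneg hρ0.le _)
      have hs : Real.sqrt (ρ^((2:ℝ)/3)) = ρ^((1:ℝ)/3) := by
        rw [show (2:ℝ)/3 = 2*((1:ℝ)/3) by norm_num]
        exact sqrt_rpow_double ρ hρ0 _
      rw [hs] at h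
      exact h
    have htt : Tendsto (fun ρ:ℝ => (2/π)^((1:ℝ)/3) * ((4/3) * ρ^((1:ℝ)/3))) atTop atTop := by
      exact Tendsto.const_mul_atTop hC
        (Tendsto.const_mul_atTop (by norm_num) (tendsto_rpow_atTop (by norm_num)))
    refine tendsto_atTop_mono' atTop ?_ htt
    filter_upwards [eventually_gt_atTop (0:ℝ)] with ρ hρ using hbound ρ hρ
  -- divergence at 0⁺
  have hzero : Tendsto F (𝓝[>] (0:ℝ)) atTop := by
    have hbound0 : ∀ ρ : ℝ, 0 < ρ →
        (2/π)^((1:ℝ)/3) * ((2/3) * ρ^(-((2:ℝ)/3))) ≤ F ρ := by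
      intro ρ hρ0
      rw [hFdef]
      apply mul_le_mul_of_nonneg_left _ hC.le
      have h := lower_a (ρ^(-(4:ℝ)/3)) (ρ^((2:ℝ)/3))
        (Real.rpow_nonneg hρ0.le _) (Real.rpow_nonneg hρ0.le _)
      have hs : Real.sqrt (ρ^(-(4:ℝ)/3)) = ρ^(-((2:ℝ)/3)) := by
        rw [show -(4:ℝ)/3 = 2*(-((2:ℝ)/3)) by norm_num]
        exact sqrt_rpow_double ρ hρ0 _
      rw [hs] at h
      exact h
    have h23 : Tendsto (fun ρ:ℝ => ρ^((2:ℝ)/3)) (𝓝[>](0:ℝ)) (𝓝[>](0:ℝ)) := by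
      rw [tendsto_nhdsWithin_iff]
      constructor
      · have hc : ContinuousAt (fun x:ℝ => x ^ ((2:ℝ)/3)) 0 :=
          Real.continuousAt_rpow_const 0 _ (Or.inr (by norm_num))
        have h := hc.tendsto
        rw [Real.zero_rpow (by norm_num : (2:ℝ)/3 ≠ 0)] at h
        exact h.mono_left nhdsWithin_le_nhds
      · filter_upwards [self_mem_nhdsWithin] with x hx
        exact Real.rpow_pos_of_pos hx _
    have hinv : Tendsto (fun ρ:ℝ => (ρ^((2:ℝ)/3))⁻¹) (𝓝[>](0:ℝ)) atTop :=
      h23.inv_tendsto_nhdsGT_zero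
    have hT0 : Tendsto (fun ρ:ℝ => (2/π)^((1:ℝ)/3) * ((2/3) * ρ^(-((2:ℝ)/3))))
        (𝓝[>](0:ℝ)) atTop := by
      apply Tendsto.const_mul_atTop hC
      apply Tendsto.const_mul_atTop (by norm_num : (0:ℝ) < 2/3)
      apply hinv.congr'
      filter_upwards [self_mem_nhdsWithin] with x hx
      rw [← Real.rpow_neg (le_of_lt hx)]
    refine tendsto_atTop_mono' _ ?_ hT0
    filter_upwards [self_mem_nhdsWithin] with ρ hρ using hbound0 ρ hρ
  refine ⟨⟨1/100, by norm_num, ?_⟩, htop, hzero, ?_⟩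
  · -- strict local minimum at ρ = 1
    intro ρ hρ hρ1
    have hρ0 : 0 < ρ := by
      have := hρ.1; nlinarith
    set u := ρ ^ ((2:ℝ)/3) with hu
    have hu0 : 0 < u := Real.rpow_pos_of_pos hρ0 _
    have ha : ρ ^ (-(4:ℝ)/3) = (u^2)⁻¹ := by
      have h2 : ρ ^ ((4:ℝ)/3) = u^2 := by
        rw [hu, show (4:ℝ)/3 = (2:ℝ)/3*2 by norm_num, Real.rpow_mul hρ0.le,
          ← Real.rpow_natCast (ρ^((2:ℝ)/3)) 2]
        norm_num
      rw [show -(4:ℝ)/3 = -((4:ℝ)/3) by norm_num, Real.rpow_neg hρ0.le, h2]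
    have hub1 : 99/100 < u := by
      rcases le_or_gt ρ 1 with h|h
      · have hh : ρ ^ (1:ℝ) ≤ ρ ^ ((2:ℝ)/3) :=
          Real.rpow_le_rpow_of_exponent_ge hρ0 h (by norm_num)
        rw [Real.rpow_one] at hh
        have := hρ.1
        rw [hu]; nlinarith
      · have hh : (1:ℝ) < u :=
          (Real.one_lt_rpow_iff_of_pos hρ0).mpr (Or.inl ⟨h, by norm_num⟩)
        linarith
    have hub2 : u < 101/100 := by
      rcases le_or_gt ρ 1 with h|h
      · have hh : u ≤ 1 := Real.rpow_le_one hρ0.le h (by norm_num)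
        linarith
      · have hh : ρ ^ ((2:ℝ)/3) ≤ ρ ^ (1:ℝ) :=
          Real.rpow_le_rpow_of_exponent_le h.le (by norm_num)
        rw [Real.rpow_one] at hh
        have := hρ.2
        rw [hu]; nlinarith
    have hu1 : u ≠ 1 := by
      rcases lt_or_gt_of_ne hρ1 with h|h
      · exact ne_of_lt (Real.rpow_lt_one hρ0.le h (by norm_num))
      · exact ne_of_gt ((Real.one_lt_rpow_iff_of_pos hρ0).mpr (Or.inl ⟨h, by norm_num⟩))
    have hq : 0 < -8*u^4+14*u^3+6*u^2-6*u-3 := by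
      nlinarith [sq_nonneg (u-1), mul_pos (sub_pos.mpr hub1) (sub_pos.mpr hub2),
        sq_nonneg (u*u - 1)]
    have h1 : 0 < (u-1)^2 := by
      have := sub_ne_zero.mpr hu1
      positivity
    have keyid : (u^2)⁻¹ + 2*u - ((u^2)⁻¹)^2/5 - 4*((u^2)⁻¹*u)/15 - 8*u^2/15 - 2
        = ((u-1)^2 * (-8*u^4+14*u^3+6*u^2-6*u-3)) / (15*u^4) := by
      field_simp
      ring
    have hG : 2 < (u^2)⁻¹ + 2*u - ((u^2)⁻¹)^2/5 - 4*((u^2)⁻¹*u)/15 - 8*u^2/15 := by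
      have hpos := div_pos (mul_pos h1 hq) (by positivity : (0:ℝ) < 15*u^4)
      rw [← keyid] at hpos
      linarith
    have hlb := lowerB ((u^2)⁻¹) u (by positivity) hu0.le
    rw [hF1, hFdef ρ, ha]
    have hfin : 2 < berI ((u^2)⁻¹) u := lt_of_lt_of_le (by linarith) hlb
    exact mul_lt_mul_of_pos_left hfin hC
  · -- unboundedness on (0, √2)
    rintro ⟨M, hM⟩
    have h1 : ∀ᶠ ρ in 𝓝[>](0:ℝ), M < F ρ := hzero.eventually (eventually_gt_atTop M)
    have h2 : Set.Ioo (0:ℝ) (Real.sqrt 2) ∈ 𝓝[>](0:ℝ) :=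
      Ioo_mem_nhdsGT_of_mem ⟨le_refl 0, Real.sqrt_pos.mpr (by norm_num)⟩
    obtain ⟨ρ, hρM, hρmem⟩ := (h1.and (eventually_of_mem h2 fun x hx => hx)).exists
    exact absurd (hM (Set.mem_image_of_mem F hρmem)) (not_le.mpr hρM)
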